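/- Let W be normally distributed with mean μ and variance 1. Then for all t ∈ ℝ, the characteristic function of W² satisfies E[e^{itW²}] = (1 − 2it)^{−1/2} exp( itμ²/(1 − 2it) ), i.e., W² has a noncentral chi-square distribution with 1 degree of freedom and noncentrality μ². -/

import Mathlib

open MeasureTheory ProbabilityTheory Real Set

noncomputable section

/-- If `W ~ N(μ, 1)`, then for all `t ∈ ℝ` the characteristic
function of `W²` is `E[e^{itW²}] = (1 − 2it)^{−1/2} exp(itμ²/(1 − 2it))`, i.e. `W²`
is noncentral chi-square with one degree of freedom and noncentrality `μ²`. -/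
theorem charFun_sq_gaussian
    {Ω : Type*} [MeasurableSpace Ω] (P : Measure Ω) [IsProbabilityMeasure P]
    (W : Ω → ℝ) (hW : Measurable W) (μ : ℝ)
    (hlaw : Measure.map W P = gaussianReal μ 1) :
    ∀ t : ℝ,
      ∫ ω, Complex.exp ((t : ℂ) * ((W ω : ℝ) : ℂ) ^ 2 * Complex.I) ∂P =
        (1 - 2 * Complex.I * (t : ℂ)) ^ (-(1 / 2) : ℂ) *
          Complex.exp (Complex.I * (t : ℂ) * (μ : ℂ) ^ 2 /
            (1 - 2 * Complex.I * (t : ℂ))) := by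
  intro t
  set z : ℂ := 1 - 2 * Complex.I * (t : ℂ) with hz
  have hzre : z.re = 1 := by simp [hz]
  have hz0 : z ≠ 0 := fun h => by simp [h] at hzre
  have hzarg : z.arg ≠ π := by
    intro h
    have h2 := (Complex.arg_eq_pi_iff.mp h).1
    rw [hzre] at h2; linarith
  -- step 1 : transfer to the Gaussian measure
  have h1 : ∫ ω, Complex.exp ((t : ℂ) * ((W ω : ℝ) : ℂ) ^ 2 * Complex.I) ∂P
      = ∫ x : ℝ, Complex.exp ((t : ℂ) * (x : ℂ) ^ 2 * Complex.I) ∂(gaussianReal μ 1) := by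
    rw [← hlaw, integral_map hW.aemeasurable]
    exact (Complex.continuous_exp.comp (by continuity)).aestronglyMeasurable
  have hdeq : (gaussianPDF μ 1)
      = fun x => ((Real.toNNReal (gaussianPDFReal μ 1 x) : NNReal) : ENNReal) := by
    funext x; rw [gaussianPDF, ENNReal.ofReal]
  rw [h1, gaussianReal_of_var_ne_zero _ one_ne_zero, hdeq,
    integral_withDensity_eq_integral_smul ((measurable_gaussianPDFReal μ 1).real_toNNReal) _]
  -- step 2 : write as a single complex exponential integral
  set b : ℂ := Complex.I * (t : ℂ) - 1/2 with hb
  have hbre : b.re < 0 := by simp [hb]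
  have h2 : ∀ x : ℝ, (Real.toNNReal (gaussianPDFReal μ 1 x)) •
        Complex.exp ((t : ℂ) * (x : ℂ) ^ 2 * Complex.I)
      = ((Real.sqrt (2 * π) : ℝ) : ℂ)⁻¹ *
        Complex.exp (b * (x:ℂ) ^ 2 + (μ:ℂ) * (x:ℂ) + (-(μ:ℂ)^2/2)) := by
    intro x
    rw [NNReal.smul_def, Real.coe_toNNReal _ (gaussianPDFReal_nonneg μ 1 x), gaussianPDFReal]
    simp only [NNReal.coe_one, mul_one]
    rw [Complex.real_smul]
    push_cast
    rw [mul_assoc, ← Complex.exp_add]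
    congr 2
    ring
  simp_rw [h2, integral_const_mul, integral_cexp_quadratic hbre]
  have hnegb : -b = z / 2 := by rw [hb, hz]; ring
  have h4b : (4:ℂ) * b = -2 * z := by rw [hb, hz]; ring
  -- the exponential part
  have hexp : (-(μ:ℂ)^2/2 - (μ:ℂ)^2 / (4 * b)) = Complex.I * (t:ℂ) * (μ:ℂ)^2 / z := by
    rw [h4b, hz]
    have : (1 : ℂ) - 2 * Complex.I * (t:ℂ) ≠ 0 := hz ▸ hz0
    field_simp
    ring
  -- the constant part
  have h2π : (0:ℝ) < 2 * π := by positivity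
  have hcoef : ((Real.sqrt (2*π) : ℝ):ℂ)⁻¹ * ((π:ℂ) / -b) ^ (1/2 : ℂ)
      = z ^ (-(1/2) : ℂ) := by
    have hzinv0 : z⁻¹ ≠ 0 := inv_ne_zero hz0
    have h1' : ((π:ℂ) / -b) = ((2*π : ℝ) : ℂ) * z⁻¹ := by
      rw [hnegb]; push_cast; field_simp
    rw [h1', Complex.cpow_def_of_ne_zero
        (mul_ne_zero (Complex.ofReal_ne_zero.mpr h2π.ne') hzinv0),
      Complex.log_ofReal_mul h2π hzinv0, Complex.log_inv z hzarg,
      Complex.cpow_def_of_ne_zero hz0]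
    have hs : Real.sqrt (2*π) = Real.exp (Real.log (2*π) / 2) := by
      rw [← Real.log_sqrt h2π.le, Real.exp_log (Real.sqrt_pos.mpr h2π)]
    rw [hs, Complex.ofReal_exp, ← Complex.exp_neg, ← Complex.exp_add]
    congr 1
    push_cast
    ring
  rw [← mul_assoc, hcoef, hexp]

end
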